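/- arXiv:1111.1187 — 2 statements merged into one kernel-verified Lean document; each statement's English description precedes it below -/
import Mathlib

section
/- Let p, q, r, s be integers with gcd(p,q) = 1, gcd(r,s) = 1, and |p*s - r*q| ≤ 4. Then there exist integers u, v with gcd(u,v) = 1 such that |p*v - u*q| = 1 and |r*v - u*s| = 1. -/
lemma key_lemma (d m : ℤ) (hd : -4 ≤ d) (hd' : d ≤ 4) (h : IsCoprime m d) :
    ∃ t : ℤ, m - t * d = 1 ∨ m - t * d = -1 := by
  have h2 : (2:ℤ) ∣ d → ¬ (2:ℤ) ∣ m := by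
    intro hdd hm
    have := h.isUnit_of_dvd' hm hdd
    rw [Int.isUnit_iff] at this
    omega
  have h3 : (3:ℤ) ∣ d → ¬ (3:ℤ) ∣ m := by
    intro hdd hm
    have := h.isUnit_of_dvd' hm hdd
    rw [Int.isUnit_iff] at this
    omega
  interval_cases d
  · have hm2 := h2 (by norm_num)
    have : m % 4 = 1 ∨ m % 4 = 3 := by omega
    rcases this with h' | h'
    · obtain ⟨k, hk⟩ : ∃ k, m = 4 * k + 1 := ⟨m / 4, by omega⟩
      exact ⟨-k, Or.inl (by rw [hk]; ring)⟩
    · obtain ⟨k, hk⟩ : ∃ k, m = 4 * k + 3 := ⟨m / 4, by omega⟩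
      exact ⟨-(k + 1), Or.inr (by rw [hk]; ring)⟩
  · have hm3 := h3 (by norm_num)
    have : m % 3 = 1 ∨ m % 3 = 2 := by omega
    rcases this with h' | h'
    · obtain ⟨k, hk⟩ : ∃ k, m = 3 * k + 1 := ⟨m / 3, by omega⟩
      exact ⟨-k, Or.inl (by rw [hk]; ring)⟩
    · obtain ⟨k, hk⟩ : ∃ k, m = 3 * k + 2 := ⟨m / 3, by omega⟩
      exact ⟨-(k + 1), Or.inr (by rw [hk]; ring)⟩
  · have hm2 := h2 (by norm_num)
    obtain ⟨k, hk⟩ : ∃ k, m = 2 * k + 1 := ⟨m / 2, by omega⟩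
    exact ⟨-k, Or.inl (by rw [hk]; ring)⟩
  · exact ⟨-(m - 1), Or.inl (by ring)⟩
  · rcases h with ⟨x, y, hxy⟩
    have hu : IsUnit m := IsUnit.of_mul_eq_one (a := m) x (by linarith)
    rw [Int.isUnit_iff] at hu
    rcases hu with h' | h'
    · exact ⟨0, Or.inl (by rw [h']; ring)⟩
    · exact ⟨0, Or.inr (by rw [h']; ring)⟩
  · exact ⟨m - 1, Or.inl (by ring)⟩
  · have hm2 := h2 (by norm_num)
    obtain ⟨k, hk⟩ : ∃ k, m = 2 * k + 1 := ⟨m / 2, by omega⟩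
    exact ⟨k, Or.inl (by rw [hk]; ring)⟩
  · have hm3 := h3 (by norm_num)
    have : m % 3 = 1 ∨ m % 3 = 2 := by omega
    rcases this with h' | h'
    · obtain ⟨k, hk⟩ : ∃ k, m = 3 * k + 1 := ⟨m / 3, by omega⟩
      exact ⟨k, Or.inl (by rw [hk]; ring)⟩
    · obtain ⟨k, hk⟩ : ∃ k, m = 3 * k + 2 := ⟨m / 3, by omega⟩
      exact ⟨k + 1, Or.inr (by rw [hk]; ring)⟩
  · have hm2 := h2 (by norm_num)
    have : m % 4 = 1 ∨ m % 4 = 3 := by omega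
    rcases this with h' | h'
    · obtain ⟨k, hk⟩ : ∃ k, m = 4 * k + 1 := ⟨m / 4, by omega⟩
      exact ⟨k, Or.inl (by rw [hk]; ring)⟩
    · obtain ⟨k, hk⟩ : ∃ k, m = 4 * k + 3 := ⟨m / 4, by omega⟩
      exact ⟨k + 1, Or.inr (by rw [hk]; ring)⟩

theorem stmt_0 (p q r s : ℤ) (hpq : Int.gcd p q = 1) (hrs : Int.gcd r s = 1)
    (h : |p * s - r * q| ≤ 4) :
    ∃ u v : ℤ, Int.gcd u v = 1 ∧ |p * v - u * q| = 1 ∧ |r * v - u * s| = 1 := by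
  obtain ⟨x, y, hxy⟩ := Int.isCoprime_iff_gcd_eq_one.mpr hpq
  have hmd : IsCoprime (r * x + y * s) (p * s - r * q) := by
    obtain ⟨x2, y2, hx2⟩ := Int.isCoprime_iff_gcd_eq_one.mpr hrs
    exact ⟨x2 * p + y2 * q, x2 * (-y) + y2 * x,
      by linear_combination hx2 + (x2 * r + y2 * s) * hxy⟩
  have hdb : -4 ≤ p * s - r * q ∧ p * s - r * q ≤ 4 := abs_le.mp h
  obtain ⟨t, ht⟩ := key_lemma (p * s - r * q) (r * x + y * s) hdb.1 hdb.2 hmd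
  refine ⟨-y + t * p, x + t * q, ?_, ?_, ?_⟩
  · apply Int.isCoprime_iff_gcd_eq_one.mp
    exact ⟨-q, p, by linear_combination hxy⟩
  · have h1 : p * (x + t * q) - (-y + t * p) * q = 1 := by linear_combination hxy
    rw [h1]; norm_num
  · have h1 : r * (x + t * q) - (-y + t * p) * s
        = (r * x + y * s) - t * (p * s - r * q) := by ring
    rw [h1]
    rcases ht with h' | h' <;> rw [h'] <;> norm_num
end

section
/- Let F be the Farey graph: vertices are pairs (p, q) of coprime integers up to simultaneous sign change (together with ∞ = (1,0)), and (p,q), (r,s) are adjacent iff |p*s - r*q| = 1. Then for any two coprime pairs (p,q), (r,s) with |p*s - r*q| ≤ 4, the graph distance between them in F is at most 2. -/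
/-- A slope: a coprime pair of integers. -/
abbrev FareyPair := {v : ℤ × ℤ // IsCoprime v.1 v.2}

/-- Two coprime pairs are identified if they agree up to simultaneous sign change. -/
instance fareySetoid : Setoid FareyPair where
  r v w := v.1 = w.1 ∨ v.1 = -w.1
  iseqv := by
    constructor
    · intro v; exact Or.inl rfl
    · rintro v w (h | h)
      · exact Or.inl h.symm
      · exact Or.inr (by rw [h, neg_neg])
    · rintro u v w (h1 | h1) (h2 | h2)
      · exact Or.inl (h1.trans h2)
      · exact Or.inr (h1.trans h2)
      · exact Or.inr (by rw [h1, h2])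
      · exact Or.inl (by rw [h1, h2, neg_neg])

/-- Vertices of the Farey graph: coprime pairs of integers up to sign. -/
abbrev FareyVertex := Quotient fareySetoid

private lemma farey_adj_wd (a b a' b' : FareyPair) (ha : a ≈ a') (hb : b ≈ b') :
    (|a.1.1 * b.1.2 - b.1.1 * a.1.2| = 1) = (|a'.1.1 * b'.1.2 - b'.1.1 * a'.1.2| = 1) := by
  have e1 : ∀ p q : ℤ × ℤ, p.1 * (-q).2 - (-q).1 * p.2 = -(p.1 * q.2 - q.1 * p.2) := by
    intro p q; simp only [Prod.fst_neg, Prod.snd_neg]; ring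
  have e2 : ∀ p q : ℤ × ℤ, (-p).1 * q.2 - q.1 * (-p).2 = -(p.1 * q.2 - q.1 * p.2) := by
    intro p q; simp only [Prod.fst_neg, Prod.snd_neg]; ring
  have e3 : ∀ p q : ℤ × ℤ, (-p).1 * (-q).2 - (-q).1 * (-p).2 = p.1 * q.2 - q.1 * p.2 := by
    intro p q; simp only [Prod.fst_neg, Prod.snd_neg]; ring
  have key : |a.1.1 * b.1.2 - b.1.1 * a.1.2| = |a'.1.1 * b'.1.2 - b'.1.1 * a'.1.2| := by
    rcases ha with ha | ha <;> rcases hb with hb | hb <;> rw [ha, hb]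
    · rw [e1, abs_neg]
    · rw [e2, abs_neg]
    · rw [show (-a'.1).1 * (-b'.1).2 - (-b'.1).1 * (-a'.1).2
            = a'.1.1 * b'.1.2 - b'.1.1 * a'.1.2 from e3 a'.1 b'.1]
  rw [key]

/-- The Farey graph: vertices are coprime pairs `(p, q)` of integers up to sign,
with `(p, q)` and `(r, s)` adjacent iff `|p * s - r * q| = 1`. -/
def Farey : SimpleGraph FareyVertex where
  Adj x y := Quotient.lift₂ (fun v w : FareyPair => |v.1.1 * w.1.2 - w.1.1 * v.1.2| = 1)
    farey_adj_wd x y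
  symm := by
    constructor
    intro x y
    induction x using Quotient.ind
    induction y using Quotient.ind
    intro h
    simpa [abs_sub_comm] using h
  loopless := by
    constructor
    intro x
    induction x using Quotient.ind
    simp [mul_comm]

private lemma exists_t (a k : ℤ) (h2 : 2 ≤ |k|) (h4 : |k| ≤ 4) (hco : IsCoprime a k) :
    ∃ t : ℤ, t * k - a = 1 ∨ t * k - a = -1 := by
  obtain ⟨c, d, hcd⟩ := hco
  have hna : ∀ m : ℤ, m ∣ a → m ∣ k → m ∣ 1 := by
    intro m ha hk
    have := dvd_add (ha.mul_left c) (hk.mul_left d)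
    rwa [hcd] at this
  have hk : k = 2 ∨ k = -2 ∨ k = 3 ∨ k = -3 ∨ k = 4 ∨ k = -4 := by
    rcases abs_cases k with ⟨h, _⟩ | ⟨h, _⟩ <;> omega
  have h2a : (2 : ℤ) ∣ k → ¬ (2 : ℤ) ∣ a := by
    intro hdk hda
    have := hna 2 hda hdk
    norm_num at this
  have h3a : (3 : ℤ) ∣ k → ¬ (3 : ℤ) ∣ a := by
    intro hdk hda
    have := hna 3 hda hdk
    norm_num at this
  rcases hk with h | h | h | h | h | h <;> subst h
  · have := h2a ⟨1, rfl⟩; exact ⟨(a + 1) / 2, by omega⟩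
  · have := h2a ⟨-1, by norm_num⟩; exact ⟨-((a + 1) / 2), by omega⟩
  · have := h3a ⟨1, rfl⟩; exact ⟨(a + 1) / 3, by omega⟩
  · have := h3a ⟨-1, by norm_num⟩; exact ⟨-((a + 1) / 3), by omega⟩
  · have := h2a ⟨2, rfl⟩; exact ⟨(a + 1) / 4, by omega⟩
  · have := h2a ⟨-2, by norm_num⟩; exact ⟨-((a + 1) / 4), by omega⟩

theorem stmt_10 (v w : FareyPair) (h : |v.1.1 * w.1.2 - w.1.1 * v.1.2| ≤ 4) :
    Farey.dist ⟦v⟧ ⟦w⟧ ≤ 2 := by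
  set k : ℤ := v.1.1 * w.1.2 - w.1.1 * v.1.2 with hk
  obtain ⟨x, y, hxy⟩ := v.2
  by_cases hk0 : k = 0
  · -- v and w are the same vertex
    set c : ℤ := x * w.1.1 + y * w.1.2 with hc
    have hr : w.1.1 = c * v.1.1 := by
      have : v.1.1 * w.1.2 - w.1.1 * v.1.2 = 0 := hk0
      linear_combination (-w.1.1) * hxy - y * this
    have hs : w.1.2 = c * v.1.2 := by
      have : v.1.1 * w.1.2 - w.1.1 * v.1.2 = 0 := hk0
      linear_combination (-w.1.2) * hxy + x * this
    have hunit : IsUnit c := w.2.isUnit_of_dvd' ⟨v.1.1, hr⟩ ⟨v.1.2, hs⟩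
    have heq : (⟦v⟧ : FareyVertex) = ⟦w⟧ := by
      apply Quotient.sound
      rcases Int.isUnit_iff.mp hunit with h1 | h1
      · exact Or.inl (Prod.ext (by rw [hr, h1, one_mul]) (by rw [hs, h1, one_mul])).symm
      · refine Or.inr ?_
        have : w.1 = -v.1 := Prod.ext (by simp [hr, h1]) (by simp [hs, h1])
        rw [this, neg_neg]
    rw [heq, SimpleGraph.dist_self]
    norm_num
  · by_cases hk1 : |k| = 1
    · -- adjacent
      have hadj : Farey.Adj ⟦v⟧ ⟦w⟧ := hk1
      have := Farey.dist_le (SimpleGraph.Walk.cons hadj SimpleGraph.Walk.nil)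
      simpa using le_trans this (by norm_num)
    · -- distance two via a common neighbor
      have h2 : 2 ≤ |k| := by
        rcases abs_cases k with ⟨h', _⟩ | ⟨h', _⟩ <;> omega
      set a : ℤ := x * w.1.1 + y * w.1.2 with ha
      have hr : w.1.1 = a * v.1.1 - k * y := by
        linear_combination (-w.1.1) * hxy
      have hs : w.1.2 = a * v.1.2 + k * x := by
        linear_combination (-w.1.2) * hxy
      have hcoak : IsCoprime a k := by
        obtain ⟨c, d, hcd⟩ := w.2
        exact ⟨c * v.1.1 + d * v.1.2, d * x - c * y, by
          linear_combination hcd - c * hr - d * hs⟩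
      obtain ⟨t, ht⟩ := exists_t a k h2 h hcoak
      have hucop : IsCoprime (-y + t * v.1.1) (x + t * v.1.2) :=
        ⟨-v.1.2, v.1.1, by linear_combination hxy⟩
      set u : FareyPair := ⟨(-y + t * v.1.1, x + t * v.1.2), hucop⟩ with hu
      have hadj1 : Farey.Adj ⟦v⟧ ⟦u⟧ := by
        show |v.1.1 * u.1.2 - u.1.1 * v.1.2| = 1
        have : v.1.1 * u.1.2 - u.1.1 * v.1.2 = 1 := by
          show v.1.1 * (x + t * v.1.2) - (-y + t * v.1.1) * v.1.2 = 1
          linear_combination hxy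
        rw [this]; norm_num
      have hadj2 : Farey.Adj ⟦u⟧ ⟦w⟧ := by
        show |u.1.1 * w.1.2 - w.1.1 * u.1.2| = 1
        have hval : u.1.1 * w.1.2 - w.1.1 * u.1.2 = t * k - a := by
          show (-y + t * v.1.1) * w.1.2 - w.1.1 * (x + t * v.1.2) = t * k - a
          rw [hr, hs]; linear_combination (t * k - a) * hxy
        rcases ht with ht | ht <;> rw [hval, ht] <;> norm_num
      have := Farey.dist_le
        (SimpleGraph.Walk.cons hadj1 (SimpleGraph.Walk.cons hadj2 SimpleGraph.Walk.nil))
      simpa using this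
end
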